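/- Let Σ' = Σ'_i × Σ'_{-i} ⊆ Σ with Σ'_{-i} nonempty and let σ ∈ Σ'_i. Then σ is not conditionally dominated on Σ' if and only if there exists an LPS μ⃗_σ on Σ'_{-i} whose support (the union of the supports of its measures) is all of Σ'_{-i}, such that for each information set I of player i, either Σ'_{σ,I,-i} = ∅ or σ is an almost-best response conditional on reaching I to μ⃗_σ | Σ'_{σ,I,-i}. -/

import Mathlib

open scoped BigOperators

noncomputable section

/-- A probability distribution on a finite type, represented as a weight function. -/
def IsDist {α : Type*} [Fintype α] (p : α → ℝ) : Prop :=
  (∀ a, 0 ≤ p a) ∧ ∑ a, p a = 1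

/-- The probability of a set under a weight function. -/
def probOf {α : Type*} [Fintype α] (p : α → ℝ) (E : Set α) : ℝ :=
  ∑ a, E.indicator p a

/-- A lexicographic probability sequence on a finite type. -/
structure LPS (Ω : Type*) [Fintype Ω] where
  m : ℕ
  μ : Fin (m + 1) → Ω → ℝ
  dist : ∀ ℓ, IsDist (μ ℓ)

namespace LPS

variable {Ω : Type*} [Fintype Ω]

open Classical in
/-- `(μ⃗(V | E))₀`: the conditional probability of `V` given `E` under the first measure
of the LPS that gives `E` positive probability (0 if there is none). -/
def condFirst (L : LPS Ω) (V E : Set Ω) : ℝ :=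
  if h : ∃ ℓ : ℕ, ∃ hℓ : ℓ < L.m + 1, 0 < probOf (L.μ ⟨ℓ, hℓ⟩) E then
    probOf (L.μ ⟨Nat.find h, (Nat.find_spec h).choose⟩) (V ∩ E) /
      probOf (L.μ ⟨Nat.find h, (Nat.find_spec h).choose⟩) E
  else 0

/-- Expectation of `f` under the first measure of `μ⃗|E`. -/
def condExp (L : LPS Ω) (E : Set Ω) (f : Ω → ℝ) : ℝ :=
  ∑ a, L.condFirst {a} E * f a

end LPS

/-- The experience of player `i` along a history: the sequence of information-set labels of
`i` visited together with the actions `i` took there. `experGo owner label i pre rest`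
processes the history `pre ++ rest`, where `pre` has already been traversed. -/
def experGo {Act Lab ι : Type*} [DecidableEq ι] (owner : List Act → ι)
    (label : List Act → Lab) (i : ι) : List Act → List Act → List (Lab × Act)
  | _, [] => []
  | pre, a :: rest =>
      (if owner pre = i then [(label pre, a)] else []) ++
        experGo owner label i (pre ++ [a]) rest

/-- A finite extensive-form game with perfect recall for `n` players and no chance moves,
presented via its set of histories (sequences of actions from the root). `owner h` is the
player who moves at a nonterminal history `h`, `label h` is the information set containing
`h`, and `payoff i h` is `i`'s utility at a terminal history `h`. -/
structure ExtGame (n : ℕ) where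
  Act : Type
  Lab : Type
  actFin : Fintype Act
  actDeq : DecidableEq Act
  actNe : Nonempty Act
  labFin : Fintype Lab
  labDeq : DecidableEq Lab
  maxLen : ℕ
  H : Set (List Act)
  root_mem : [] ∈ H
  prefix_closed : ∀ (h : List Act) (a : Act), h ++ [a] ∈ H → h ∈ H
  len_bound : ∀ h ∈ H, h.length ≤ maxLen
  owner : List Act → Fin n
  label : List Act → Lab
  payoff : Fin n → List Act → ℝ
  payoff_mem : ∀ (i : Fin n) (h : List Act), h ∈ H → (∀ a, h ++ [a] ∉ H) →
    payoff i h ∈ Set.Icc (0 : ℝ) 1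
  same_owner : ∀ h h', h ∈ H → h' ∈ H → (∃ a, h ++ [a] ∈ H) → (∃ a, h' ++ [a] ∈ H) →
    label h = label h' → owner h = owner h'
  same_actions : ∀ h h', h ∈ H → h' ∈ H → (∃ a, h ++ [a] ∈ H) → (∃ a, h' ++ [a] ∈ H) →
    label h = label h' → ∀ a, (h ++ [a] ∈ H ↔ h' ++ [a] ∈ H)
  no_two_on_path : ∀ h h', h ∈ H → h' ∈ H → (∃ a, h ++ [a] ∈ H) → (∃ a, h' ++ [a] ∈ H) →
    label h = label h' → h <+: h' → h = h'
  perfect_recall : ∀ h h', h ∈ H → h' ∈ H → (∃ a, h ++ [a] ∈ H) → (∃ a, h' ++ [a] ∈ H) →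
    label h = label h' →
    experGo owner label (owner h) [] h = experGo owner label (owner h) [] h'

attribute [instance] ExtGame.actFin ExtGame.actDeq ExtGame.actNe ExtGame.labFin
  ExtGame.labDeq

namespace ExtGame

variable {n : ℕ}

/-- `h` is a decision node. -/
def Dec (G : ExtGame n) (h : List G.Act) : Prop := h ∈ G.H ∧ ∃ a, h ++ [a] ∈ G.H

/-- `h` is a decision node of player `i`. -/
def DecOf (G : ExtGame n) (i : Fin n) (h : List G.Act) : Prop := G.Dec h ∧ G.owner h = i

/-- `c` is (the label of) an information set of player `i`. -/
def IsInfo (G : ExtGame n) (i : Fin n) (c : G.Lab) : Prop :=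
  ∃ h, G.DecOf i h ∧ G.label h = c

/-- A pure strategy of player `i`: an assignment of an available action to each
information set of `i`. -/
def PStrat (G : ExtGame n) (i : Fin n) : Type :=
  {s : G.Lab → G.Act // ∀ h, G.DecOf i h → h ++ [s (G.label h)] ∈ G.H}

instance (G : ExtGame n) (i : Fin n) : Finite (G.PStrat i) := Subtype.finite

noncomputable instance (G : ExtGame n) (i : Fin n) : Fintype (G.PStrat i) :=
  Fintype.ofFinite _

noncomputable instance (G : ExtGame n) (i : Fin n) : DecidableEq (G.PStrat i) :=
  Classical.decEq _

/-- Opponents' pure-strategy profiles. -/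
abbrev OppProf (G : ExtGame n) (i : Fin n) : Type :=
  (j : {j : Fin n // j ≠ i}) → G.PStrat j.val

/-- Combining a strategy for `i` with an opponents' profile. -/
def combine (G : ExtGame n) (i : Fin n) (s : G.PStrat i) (τ : G.OppProf i) :
    (j : Fin n) → G.PStrat j :=
  fun j => if h : j = i then cast (congrArg G.PStrat h.symm) s else τ ⟨j, h⟩

open Classical in
/-- The play of the game from history `h` under profile `sp`, with fuel `f`. -/
def playFrom (G : ExtGame n) (sp : (j : Fin n) → G.PStrat j) :
    ℕ → List G.Act → List G.Act
  | 0, h => h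
  | f + 1, h =>
      if G.Dec h then
        G.playFrom sp f (h ++ [(sp (G.owner h)).val (G.label h)])
      else h

/-- The terminal history reached by the profile `sp`. -/
def outcome (G : ExtGame n) (sp : (j : Fin n) → G.PStrat j) : List G.Act :=
  G.playFrom sp (G.maxLen + 1) []

/-- Player `i`'s utility under the profile `sp`. -/
def U (G : ExtGame n) (i : Fin n) (sp : (j : Fin n) → G.PStrat j) : ℝ :=
  G.payoff i (G.outcome sp)

/-- The profile `sp` reaches the information set `c` of player `i`. -/
def Reaches (G : ExtGame n) (sp : (j : Fin n) → G.PStrat j) (i : Fin n) (c : G.Lab) :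
    Prop :=
  ∃ p, p <+: G.outcome sp ∧ G.DecOf i p ∧ G.label p = c

/-- `Σ'_{σ,I,-i}`: the opponents' profiles in `T` for which `(σ, τ₋ᵢ)` reaches `c`. -/
def ReachSet (G : ExtGame n) (i : Fin n) (σ : G.PStrat i) (c : G.Lab)
    (T : Set (G.OppProf i)) : Set (G.OppProf i) :=
  {τ ∈ T | G.Reaches (G.combine i σ τ) i c}

/-- `Σ'_{σ,σ',I,-i}` for a mixed strategy `m`. -/
def ReachSetMix (G : ExtGame n) (i : Fin n) (σ : G.PStrat i) (m : G.PStrat i → ℝ)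
    (c : G.Lab) (T : Set (G.OppProf i)) : Set (G.OppProf i) :=
  {τ ∈ T | G.Reaches (G.combine i σ τ) i c ∧
    ∀ s, 0 < m s → G.Reaches (G.combine i s τ) i c}

/-- Utility of the mixed strategy `m` of player `i` against the opponents' profile `τ`. -/
def EUmixE (G : ExtGame n) (i : Fin n) (m : G.PStrat i → ℝ) (τ : G.OppProf i) : ℝ :=
  ∑ s : G.PStrat i, m s * G.U i (G.combine i s τ)

/-- `σ` is conditionally dominated on `Σ'_i × T`. -/
def CondDom (G : ExtGame n) (i : Fin n) (σ : G.PStrat i) (T : Set (G.OppProf i)) :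
    Prop :=
  ∃ c, G.IsInfo i c ∧ ∃ m : G.PStrat i → ℝ, IsDist m ∧
    (G.ReachSetMix i σ m c T).Nonempty ∧
    ∀ τ ∈ G.ReachSetMix i σ m c T, G.U i (G.combine i σ τ) < G.EUmixE i m τ

/-- The information set `c'` of player `i` is at or below `c`. -/
def AtOrBelow (G : ExtGame n) (i : Fin n) (c' c : G.Lab) : Prop :=
  ∃ h h', G.DecOf i h ∧ G.DecOf i h' ∧ G.label h' = c ∧ G.label h = c' ∧ h' <+: h

/-- The information set `c'` of player `i` precedes `c`. -/
def Precedes (G : ExtGame n) (i : Fin n) (c' c : G.Lab) : Prop :=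
  ∃ h h', G.DecOf i h ∧ G.DecOf i h' ∧ G.label h = c' ∧ G.label h' = c ∧
    h <+: h' ∧ h ≠ h'

/-- `σ` is conditionally dominated′ on `Σ'_i × T`. -/
def CondDom' (G : ExtGame n) (i : Fin n) (σ : G.PStrat i) (T : Set (G.OppProf i)) :
    Prop :=
  ∃ c, G.IsInfo i c ∧ (G.ReachSet i σ c T).Nonempty ∧
    ∃ m : G.PStrat i → ℝ, IsDist m ∧
      (∀ s, 0 < m s → ∀ c', G.IsInfo i c' → ¬G.AtOrBelow i c' c →
        s.val c' = σ.val c') ∧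
      ∀ τ ∈ G.ReachSet i σ c T, G.U i (G.combine i σ τ) < G.EUmixE i m τ

/-- `σ` is weakly dominated by the mixed strategy `m` with respect to `T`. -/
def WDomE (G : ExtGame n) (i : Fin n) (m : G.PStrat i → ℝ) (σ : G.PStrat i)
    (T : Set (G.OppProf i)) : Prop :=
  (∀ τ ∈ T, G.U i (G.combine i σ τ) ≤ G.EUmixE i m τ) ∧
    ∃ τ ∈ T, G.U i (G.combine i σ τ) < G.EUmixE i m τ

/-- `σ` is an almost-best response conditional on reaching the information set `c` to the
first measure of `L | E`. -/
def AlmostBestAt (G : ExtGame n) (i : Fin n) (σ : G.PStrat i) (c : G.Lab)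
    (L : LPS (G.OppProf i)) (E : Set (G.OppProf i)) : Prop :=
  ∀ σ' : G.PStrat i,
    (∀ c', G.IsInfo i c' → G.Precedes i c' c → σ'.val c' = σ.val c') →
    L.condExp E (fun τ => G.U i (G.combine i σ' τ)) ≤
      L.condExp E (fun τ => G.U i (G.combine i σ τ))

end ExtGame

end
-- ============ auxiliary development ============
open Classical

namespace ExtGame

variable {n : ℕ} (G : ExtGame n)

/-- The action chosen by profile `sp` at history `h`. -/
def act (sp : (j : Fin n) → G.PStrat j) (h : List G.Act) : G.Act :=
  (sp (G.owner h)).val (G.label h)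

/-- `p` follows profile `sp`. -/
def Follows (sp : (j : Fin n) → G.PStrat j) (p : List G.Act) : Prop :=
  ∀ j (hj : j < p.length), p[j] = G.act sp (p.take j)

variable {G}

lemma mem_H_of_prefix {p h : List G.Act} (hp : p <+: h) (hh : h ∈ G.H) : p ∈ G.H := by
  obtain ⟨t, rfl⟩ := hp
  induction t using List.reverseRecOn with
  | nil => simpa using hh
  | append_singleton t a ih =>
    exact ih (G.prefix_closed _ a (by simpa [List.append_assoc] using hh))

lemma playFrom_extends (sp : (j : Fin n) → G.PStrat j) :
    ∀ (f : ℕ) (h : List G.Act), h <+: G.playFrom sp f h := by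
  intro f
  induction f with
  | zero => intro h; simp [ExtGame.playFrom]
  | succ f ih =>
    intro h
    simp only [ExtGame.playFrom]
    by_cases hd : G.Dec h
    · rw [if_pos hd]
      exact (List.prefix_append h _).trans (ih _)
    · rw [if_neg hd]

lemma playFrom_mem (sp : (j : Fin n) → G.PStrat j) :
    ∀ (f : ℕ) (h : List G.Act), h ∈ G.H → G.playFrom sp f h ∈ G.H := by
  intro f
  induction f with
  | zero => intro h hh; simpa [ExtGame.playFrom] using hh
  | succ f ih =>
    intro h hh
    simp only [ExtGame.playFrom]
    by_cases hd : G.Dec h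
    · rw [if_pos hd]
      exact ih _ ((sp (G.owner h)).2 h ⟨hd, rfl⟩)
    · rwa [if_neg hd]

lemma playFrom_not_dec (sp : (j : Fin n) → G.PStrat j) :
    ∀ (f : ℕ) (h : List G.Act), h ∈ G.H → G.maxLen + 1 - h.length ≤ f →
      ¬ G.Dec (G.playFrom sp f h) := by
  intro f
  induction f with
  | zero =>
    intro h hh hf
    have := G.len_bound h hh
    omega
  | succ f ih =>
    intro h hh hf
    simp only [ExtGame.playFrom]
    by_cases hd : G.Dec h
    · rw [if_pos hd]
      have hlen : h.length + 1 ≤ G.maxLen := by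
        obtain ⟨a, ha⟩ := hd.2
        have := G.len_bound _ ha
        simpa using this
      exact ih _ ((sp (G.owner h)).2 h ⟨hd, rfl⟩) (by simp; omega)
    · rwa [if_neg hd]

/-- Playing toward a followed history `p`: the play from any prefix of `p` passes
through `p`. -/
lemma playFrom_eq_playFrom_of_follows {sp : (j : Fin n) → G.PStrat j} {p : List G.Act}
    (hpH : p ∈ G.H) (hF : G.Follows sp p) :
    ∀ (f : ℕ) (h : List G.Act), h <+: p → p.length - h.length ≤ f →
      G.playFrom sp f h = G.playFrom sp (f - (p.length - h.length)) p := by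
  intro f
  induction f with
  | zero =>
    intro h hh hf
    have : h = p := hh.eq_of_length_le (by omega)
    subst this; simp
  | succ f ih =>
    intro h hh hf
    by_cases hhp : h = p
    · subst hhp; simp
    · have hlt : h.length < p.length := by
        rcases lt_or_ge h.length p.length with h' | h'
        · exact h'
        · exact absurd (hh.eq_of_length_le h') hhp
      have htake : p.take h.length = h := (List.prefix_iff_eq_take.mp hh).symm
      have hsucc : p.take (h.length + 1) <+: p := List.take_prefix _ _
      have hsucc' : p.take (h.length + 1) = h ++ [p[h.length]] := by
        rw [← List.take_concat_get' p h.length hlt, htake]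
      have hd : G.Dec h := by
        refine ⟨mem_H_of_prefix hh hpH, ⟨p[h.length], ?_⟩⟩
        rw [← hsucc']
        exact mem_H_of_prefix hsucc hpH
      have hact : p[h.length] = G.act sp h := by
        have := hF h.length hlt
        rwa [htake] at this
      simp only [ExtGame.playFrom, if_pos hd]
      have : h ++ [G.act sp h] = p.take (h.length + 1) := by
        rw [hsucc', hact]
      rw [ExtGame.act] at this
      rw [this]
      have := ih (p.take (h.length + 1)) hsucc (by simp; omega)
      rw [this]
      congr 1
      simp
      omega

lemma follows_prefix_outcome {sp : (j : Fin n) → G.PStrat j} {p : List G.Act}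
    (hpH : p ∈ G.H) (hF : G.Follows sp p) : p <+: G.outcome sp := by
  have hlen := G.len_bound p hpH
  have := playFrom_eq_playFrom_of_follows hpH hF (G.maxLen + 1) [] (by simp) (by simp; omega)
  rw [ExtGame.outcome, this]
  exact playFrom_extends sp _ p

lemma outcome_eq_play_from {sp : (j : Fin n) → G.PStrat j} {p : List G.Act}
    (hpH : p ∈ G.H) (hF : G.Follows sp p) :
    G.outcome sp = G.playFrom sp (G.maxLen + 1 - p.length) p := by
  have := playFrom_eq_playFrom_of_follows hpH hF (G.maxLen + 1) [] (by simp)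
    (by have := G.len_bound p hpH; simp; omega)
  simpa [ExtGame.outcome] using this


lemma playFrom_succ (sp : (j : Fin n) → G.PStrat j) (f : ℕ) {h : List G.Act}
    (hd : G.Dec h) :
    G.playFrom sp (f + 1) h = G.playFrom sp f (h ++ [G.act sp h]) := by
  simp only [ExtGame.playFrom, if_pos hd]; rfl

lemma playFrom_succ_not (sp : (j : Fin n) → G.PStrat j) (f : ℕ) {h : List G.Act}
    (hd : ¬ G.Dec h) : G.playFrom sp (f + 1) h = h := by
  simp only [ExtGame.playFrom, if_neg hd]

lemma take_of_prefix {α : Type*} {p l : List α} (hp : p <+: l) {j : ℕ}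
    (hj : j ≤ p.length) : l.take j = p.take j := by
  obtain ⟨t, rfl⟩ := hp
  rw [List.take_append, Nat.sub_eq_zero_of_le hj]
  simp

lemma prefix_take_of_le {α : Type*} {p l : List α} (hp : p <+: l) {j : ℕ}
    (hj : p.length ≤ j) : p <+: l.take j := by
  have : (l.take j).take p.length = p := by
    rw [List.take_take, min_eq_left hj, ← List.prefix_iff_eq_take.mp hp]
  rw [← this]
  exact List.take_prefix _ _

lemma play_spec (sp : (j : Fin n) → G.PStrat j) :
    ∀ (f : ℕ) (h : List G.Act), h ∈ G.H → ∀ j, h.length ≤ j →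
      ∀ (hj : j < (G.playFrom sp f h).length),
      G.Dec ((G.playFrom sp f h).take j) ∧
        (G.playFrom sp f h)[j] = G.act sp ((G.playFrom sp f h).take j) := by
  intro f
  induction f with
  | zero =>
    intro h hh j hij hj
    simp [ExtGame.playFrom] at hj
    omega
  | succ f ih =>
    intro h hh j hij hj
    by_cases hd : G.Dec h
    · revert hj
      simp only [playFrom_succ sp f hd]
      intro hj
      have hmem : h ++ [G.act sp h] ∈ G.H := (sp (G.owner h)).2 h ⟨hd, rfl⟩
      rcases eq_or_lt_of_le hij with hje | hjlt
      · subst hje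
        have hpre : h ++ [G.act sp h] <+: G.playFrom sp f (h ++ [G.act sp h]) :=
          playFrom_extends sp f _
        have htake : (G.playFrom sp f (h ++ [G.act sp h])).take h.length = h := by
          rw [take_of_prefix hpre (by simp)]
          simp
        have hget : (G.playFrom sp f (h ++ [G.act sp h]))[h.length] = G.act sp h := by
          rw [← hpre.getElem (by simp)]
          simp
        rw [htake, hget]
        exact ⟨hd, rfl⟩
      · exact ih _ hmem j (by simpa using hjlt) hj
    · revert hj
      simp only [playFrom_succ_not sp f hd]
      intro hj
      omega

lemma outcome_mem (sp : (j : Fin n) → G.PStrat j) : G.outcome sp ∈ G.H :=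
  playFrom_mem sp _ [] G.root_mem

lemma outcome_not_dec (sp : (j : Fin n) → G.PStrat j) : ¬ G.Dec (G.outcome sp) :=
  playFrom_not_dec sp _ [] G.root_mem (by simp)

lemma outcome_spec {sp : (j : Fin n) → G.PStrat j} {p : List G.Act}
    (hp : p <+: G.outcome sp) :
    ∀ j (hj : j < p.length), G.Dec (p.take j) ∧ p[j] = G.act sp (p.take j) := by
  intro j hj
  have hj' : j < (G.outcome sp).length := lt_of_lt_of_le hj hp.length_le
  have hspec : G.Dec ((G.outcome sp).take j) ∧
      (G.outcome sp)[j]'hj' = G.act sp ((G.outcome sp).take j) :=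
    play_spec sp (G.maxLen + 1) [] G.root_mem j (by simp) (by exact hj')
  have htake : (G.outcome sp).take j = p.take j := take_of_prefix hp (le_of_lt hj)
  have hget : (G.outcome sp)[j]'hj' = p[j] := (hp.getElem hj).symm
  rw [htake, hget] at hspec
  exact hspec

lemma prefix_outcome_mem {sp : (j : Fin n) → G.PStrat j} {p : List G.Act}
    (hp : p <+: G.outcome sp) : p ∈ G.H :=
  mem_H_of_prefix hp (outcome_mem sp)

lemma prefix_outcome_follows {sp : (j : Fin n) → G.PStrat j} {p : List G.Act}
    (hp : p <+: G.outcome sp) : G.Follows sp p :=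
  fun j hj => (outcome_spec hp j hj).2

/-- Two profiles that choose the same actions along the play of `sp` beyond a common
reached node `p` have the same outcome. -/
lemma outcome_congr_from {sp sp' : (j : Fin n) → G.PStrat j} {p : List G.Act}
    (hp : p <+: G.outcome sp) (hp' : p <+: G.outcome sp')
    (hagree : ∀ h', p <+: h' → h' <+: G.outcome sp → G.Dec h' →
      G.act sp h' = G.act sp' h') :
    G.outcome sp = G.outcome sp' := by
  have hF : G.Follows sp' (G.outcome sp) := by
    intro j hj
    have hspec := outcome_spec (List.prefix_refl _) j hj
    rcases lt_or_ge j p.length with hjp | hjp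
    · have h1 : (G.outcome sp).take j = p.take j := take_of_prefix hp (le_of_lt hjp)
      have hget : (G.outcome sp)[j] = p[j]'hjp := (hp.getElem hjp).symm
      have h2 := (outcome_spec hp' j hjp).2
      have h1' : (G.outcome sp').take j = p.take j := take_of_prefix hp' (le_of_lt hjp)
      rw [hget, h1, h2]
    · have hple : p <+: (G.outcome sp).take j := prefix_take_of_le hp hjp
      have := hagree _ hple (List.take_prefix _ _) hspec.1
      rw [hspec.2, this]
  have hpre : G.outcome sp <+: G.outcome sp' :=
    follows_prefix_outcome (outcome_mem sp) hF
  rcases eq_or_lt_of_le hpre.length_le with hlen | hlen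
  · exact hpre.eq_of_length_le (le_of_eq hlen.symm)
  · exfalso
    have hdec := (outcome_spec (List.prefix_refl (G.outcome sp')) (G.outcome sp).length hlen).1
    have htake : (G.outcome sp').take (G.outcome sp).length = G.outcome sp := by
      rw [take_of_prefix hpre (le_refl _)]
      simp
    rw [htake] at hdec
    exact outcome_not_dec sp hdec


end ExtGame

section Exper

variable {Act Lab ι : Type*} [DecidableEq ι] (o : List Act → ι) (l : List Act → Lab) (i : ι)

lemma experGo_append : ∀ (xs pre ys : List Act),
    experGo o l i pre (xs ++ ys) = experGo o l i pre xs ++ experGo o l i (pre ++ xs) ys := by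
  intro xs
  induction xs with
  | nil =>
    intro pre ys
    rw [List.nil_append, List.append_nil]
    conv_rhs => rw [show experGo o l i pre ([] : List Act) = [] from rfl]
    rw [List.nil_append]
  | cons a xs ih =>
    intro pre ys
    simp only [List.cons_append, experGo, List.append_eq]
    rw [ih (pre ++ [a]) ys]
    simp only [List.singleton_append, List.append_assoc]

lemma exper_elems : ∀ (rest pre : List Act) (e : Lab × Act),
    e ∈ experGo o l i pre rest →
    ∃ j, ∃ (hj : j < rest.length), o (pre ++ rest.take j) = i ∧
      e = (l (pre ++ rest.take j), rest[j]) := by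
  intro rest
  induction rest with
  | nil => intro pre e he; simp [experGo] at he
  | cons a rest ih =>
    intro pre e he
    simp only [experGo, List.mem_append] at he
    rcases he with he | he
    · by_cases ho : o pre = i
      · rw [if_pos ho] at he
        simp at he
        exact ⟨0, by simp, by simpa using ho, by simpa using he⟩
      · rw [if_neg ho] at he; simp at he
    · obtain ⟨j, hj, ho, hee⟩ := ih (pre ++ [a]) e he
      try simp only [List.append_nil] at ho hee
      refine ⟨j + 1, by simpa using hj, ?_, ?_⟩
      · show o (pre ++ (a :: rest).take (j + 1)) = i
        rw [List.take_succ_cons, List.append_cons]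
        exact ho
      · show e = (l (pre ++ (a :: rest).take (j + 1)), (a :: rest)[j + 1]'(by simpa using hj))
        rw [List.take_succ_cons, List.append_cons]
        simpa using hee

lemma exper_mem : ∀ (rest pre : List Act) (j : ℕ) (hj : j < rest.length),
    o (pre ++ rest.take j) = i →
    (l (pre ++ rest.take j), rest[j]) ∈ experGo o l i pre rest := by
  intro rest pre j hj ho
  have hsplit : rest = rest.take j ++ (rest[j] :: rest.drop (j + 1)) := by
    rw [← List.drop_eq_getElem_cons hj, List.take_append_drop]
  have key : experGo o l i pre rest = experGo o l i pre (rest.take j) ++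
      experGo o l i (pre ++ rest.take j) (rest[j] :: rest.drop (j + 1)) := by
    conv_lhs => rw [hsplit]
    rw [experGo_append]
  rw [key]
  apply List.mem_append_right
  have : experGo o l i (pre ++ rest.take j) (rest[j] :: rest.drop (j + 1)) =
      [(l (pre ++ rest.take j), rest[j])] ++
        experGo o l i (pre ++ rest.take j ++ [rest[j]]) (rest.drop (j + 1)) := by
    simp only [experGo, if_pos ho]
  rw [this]
  simp

end Exper

namespace ExtGame

variable {n : ℕ} {G : ExtGame n} {i : Fin n}

lemma combine_self (s : G.PStrat i) (τ : G.OppProf i) : G.combine i s τ i = s := by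
  simp [ExtGame.combine]

lemma combine_ne {j : Fin n} (hj : j ≠ i) (s : G.PStrat i) (τ : G.OppProf i) :
    G.combine i s τ j = τ ⟨j, hj⟩ := by
  simp [ExtGame.combine, hj]

lemma act_combine_of_owner {h : List G.Act} (ho : G.owner h = i) (s : G.PStrat i)
    (τ : G.OppProf i) : G.act (G.combine i s τ) h = s.val (G.label h) := by
  rw [ExtGame.act]
  have : G.combine i s τ (G.owner h) = cast (congrArg G.PStrat ho.symm) s := by
    subst ho; simpa using combine_self s τ
  rw [this]
  subst ho
  simp

lemma act_combine_of_not_owner {h : List G.Act} (ho : ¬ G.owner h = i) (s s' : G.PStrat i)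
    (τ : G.OppProf i) : G.act (G.combine i s τ) h = G.act (G.combine i s' τ) h := by
  rw [ExtGame.act, ExtGame.act, combine_ne ho, combine_ne ho]

lemma dec_take {p : List G.Act} (hpH : p ∈ G.H) {j : ℕ} (hj : j < p.length) :
    G.Dec (p.take j) := by
  refine ⟨mem_H_of_prefix (List.take_prefix _ _) hpH, ⟨p[j], ?_⟩⟩
  rw [List.take_concat_get' p j hj]
  exact mem_H_of_prefix (List.take_prefix _ _) hpH

/-- Lemma R: if `s` agrees with `σ` along the path to `p`, then `(s, τ)` also reaches
`p`. -/
lemma reach_of_agree {σ s : G.PStrat i} {τ : G.OppProf i} {p : List G.Act}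
    (hp : p <+: G.outcome (G.combine i σ τ))
    (hagree : ∀ j (hj : j < p.length), G.owner (p.take j) = i →
      s.val (G.label (p.take j)) = σ.val (G.label (p.take j))) :
    p <+: G.outcome (G.combine i s τ) := by
  apply follows_prefix_outcome (prefix_outcome_mem hp)
  intro j hj
  have hsp := outcome_spec hp j hj
  rw [hsp.2]
  by_cases ho : G.owner (p.take j) = i
  · rw [act_combine_of_owner ho, act_combine_of_owner ho, hagree j hj ho]
  · exact (act_combine_of_not_owner ho σ s τ)
  

lemma exper_act {s : G.PStrat i} {τ : G.OppProf i} {p : List G.Act}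
    (hp : p <+: G.outcome (G.combine i s τ)) :
    ∀ e ∈ experGo G.owner G.label i [] p, e.2 = s.val e.1 := by
  intro e he
  obtain ⟨j, hj, ho, he⟩ := exper_elems G.owner G.label i p [] e he
  simp only [List.nil_append] at ho he
  subst he
  have := (outcome_spec hp j hj).2
  rw [this, act_combine_of_owner ho]

lemma exper_eq_of_label {p p' : List G.Act} (hp : G.DecOf i p) (hp' : G.DecOf i p')
    (hl : G.label p = G.label p') :
    experGo G.owner G.label i [] p = experGo G.owner G.label i [] p' := by
  have := G.perfect_recall p p' hp.1.1 hp'.1.1 hp.1.2 hp'.1.2 hl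
  rwa [hp.2] at this

/-- Key rigidity: if `(σ, τ)` reaches a node `p` of the information set `c` and
`(s, τ')` reaches a node `p'` of `c`, then `s` agrees with `σ` at all of `i`'s
information sets visited strictly before `p`. -/
lemma agree_of_reach {σ s : G.PStrat i} {τ τ' : G.OppProf i} {p p' : List G.Act}
    (hp : p <+: G.outcome (G.combine i σ τ)) (hdp : G.DecOf i p)
    (hp' : p' <+: G.outcome (G.combine i s τ')) (hdp' : G.DecOf i p')
    (hl : G.label p = G.label p') :
    ∀ j (hj : j < p.length), G.owner (p.take j) = i →
      s.val (G.label (p.take j)) = σ.val (G.label (p.take j)) := by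
  intro j hj ho
  have hexp := exper_eq_of_label hdp hdp' hl
  have hmem : (G.label (p.take j), p[j]) ∈ experGo G.owner G.label i [] p := by
    have := exper_mem G.owner G.label i p [] j hj (by simpa using ho)
    simpa using this
  have h1 : p[j] = σ.val (G.label (p.take j)) := by
    rw [(outcome_spec hp j hj).2, act_combine_of_owner ho]
  have h2 : p[j] = s.val (G.label (p.take j)) := by
    have hmem' : (G.label (p.take j), p[j]) ∈ experGo G.owner G.label i [] p' := by
      rw [← hexp]; exact hmem
    exact exper_act hp' _ hmem'
  rw [← h1, ← h2]

lemma reach_unique {sp : (j : Fin n) → G.PStrat j} {p p' : List G.Act}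
    (hp : p <+: G.outcome sp) (hd : G.DecOf i p)
    (hp' : p' <+: G.outcome sp) (hd' : G.DecOf i p') (hl : G.label p = G.label p') :
    p = p' := by
  rcases List.prefix_or_prefix_of_prefix hp hp' with h | h
  · exact G.no_two_on_path p p' hd.1.1 hd'.1.1 hd.1.2 hd'.1.2 hl h
  · exact (G.no_two_on_path p' p hd'.1.1 hd.1.1 hd'.1.2 hd.1.2 hl.symm h).symm

lemma decOf_take {p : List G.Act} (hpH : p ∈ G.H) {j : ℕ} (hj : j < p.length)
    (ho : G.owner (p.take j) = i) : G.DecOf i (p.take j) :=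
  ⟨dec_take hpH hj, ho⟩

lemma precedes_mk {p : List G.Act} (hd : G.DecOf i p) {j : ℕ} (hj : j < p.length)
    (ho : G.owner (p.take j) = i) : G.Precedes i (G.label (p.take j)) (G.label p) := by
  refine ⟨p.take j, p, decOf_take hd.1.1 hj ho, hd, rfl, rfl, List.take_prefix _ _, ?_⟩
  intro he
  have := congrArg List.length he
  simp at this
  omega

lemma isInfo_take {p : List G.Act} (hpH : p ∈ G.H) {j : ℕ} (hj : j < p.length)
    (ho : G.owner (p.take j) = i) : G.IsInfo i (G.label (p.take j)) :=
  ⟨p.take j, decOf_take hpH hj ho, rfl⟩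

lemma precedes_irrefl {c : G.Lab} : ¬ G.Precedes i c c := by
  rintro ⟨h, h', hd, hd', hl, hl', hpre, hne⟩
  exact hne (G.no_two_on_path h h' hd.1.1 hd'.1.1 hd.1.2 hd'.1.2 (hl.trans hl'.symm) hpre)

/-- If `c` precedes `b`, then above every `b`-node of `i` there is a `c`-node of `i`. -/
lemma node_above_of_precedes {c b : G.Lab} (hcb : G.Precedes i c b) {h : List G.Act}
    (hd : G.DecOf i h) (hl : G.label h = b) :
    ∃ j, ∃ (hj : j < h.length), G.owner (h.take j) = i ∧ G.label (h.take j) = c := by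
  obtain ⟨h₁, h₂, hd₁, hd₂, hl₁, hl₂, hpre, hne⟩ := hcb
  have hexp := exper_eq_of_label hd₂ hd (hl₂.trans hl.symm)
  have hlen : h₁.length < h₂.length := by
    rcases lt_or_ge h₁.length h₂.length with h' | h'
    · exact h'
    · exact absurd (hpre.eq_of_length_le h') hne
  have htake : h₂.take h₁.length = h₁ := (List.prefix_iff_eq_take.mp hpre).symm
  have hmem : (G.label (h₂.take h₁.length), h₂[h₁.length]) ∈
      experGo G.owner G.label i [] h₂ := by
    have := exper_mem G.owner G.label i h₂ [] h₁.length hlen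
      (by simp only [List.nil_append]; rw [htake]; exact hd₁.2)
    simpa using this
  rw [hexp] at hmem
  obtain ⟨j, hj, ho, he⟩ := exper_elems G.owner G.label i h [] _ hmem
  simp only [List.nil_append] at ho he
  refine ⟨j, hj, ho, ?_⟩
  have hfst := congrArg Prod.fst he
  simp only at hfst
  rw [← hfst, htake, hl₁]

lemma precedes_trans {c b a : G.Lab} (h1 : G.Precedes i c b) (h2 : G.Precedes i b a) :
    G.Precedes i c a := by
  obtain ⟨q, r, hdq, hdr, hlq, hlr, hqr, hne⟩ := h2
  obtain ⟨j, hj, ho, hlab⟩ := node_above_of_precedes h1 hdq hlq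
  refine ⟨q.take j, r, decOf_take hdq.1.1 hj ho, hdr, hlab, hlr,
    (List.take_prefix _ _).trans hqr, ?_⟩
  intro he
  have h3 := congrArg List.length he
  have h4 := hqr.length_le
  simp at h3
  omega

lemma atOrBelow_cases {c'' c : G.Lab} (h : G.AtOrBelow i c'' c) :
    c'' = c ∨ G.Precedes i c c'' := by
  obtain ⟨h₀, h₁, hd₀, hd₁, hl₁, hl₀, hpre⟩ := h
  by_cases he : h₁ = h₀
  · left; rw [← hl₀, ← hl₁, he]
  · right; exact ⟨h₁, h₀, hd₁, hd₀, hl₁, hl₀, hpre, he⟩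

lemma not_atOrBelow_of_precedes {b c : G.Lab} (hp : G.Precedes i b c) :
    ¬ G.AtOrBelow i b c := by
  intro hab
  rcases atOrBelow_cases hab with rfl | hcb
  · exact precedes_irrefl hp
  · exact precedes_irrefl (precedes_trans hp hcb)

lemma atOrBelow_mk {p h' : List G.Act} (hd : G.DecOf i p) (hd' : G.DecOf i h')
    (hpre : p <+: h') : G.AtOrBelow i (G.label h') (G.label p) :=
  ⟨h', p, hd', hd, rfl, rfl, hpre⟩

/-- A minimal element for a transitive irreflexive relation on a nonempty finite set. -/
lemma exists_minimal_rel {α : Type*} [DecidableEq α] (r : α → α → Prop)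
    (htrans : ∀ a b c, r a b → r b c → r a c) (hirr : ∀ a, ¬ r a a)
    (S : Finset α) (hS : S.Nonempty) : ∃ x ∈ S, ∀ y ∈ S, ¬ r y x := by
  induction S using Finset.strongInduction with
  | _ S ih =>
    obtain ⟨x, hx⟩ := hS
    by_cases hmin : ∀ y ∈ S, ¬ r y x
    · exact ⟨x, hx, hmin⟩
    · push_neg at hmin
      obtain ⟨y, hy, hyx⟩ := hmin
      have hsub : S.filter (fun z => r z x) ⊂ S := by
        refine ⟨Finset.filter_subset _ _, fun hsub => ?_⟩
        have := hsub hx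
        rw [Finset.mem_filter] at this
        exact hirr x this.2
      obtain ⟨z, hz, hzmin⟩ := ih _ hsub ⟨y, by simp [hy, hyx]⟩
      rw [Finset.mem_filter] at hz
      refine ⟨z, hz.1, fun w hw hwz => ?_⟩
      exact hzmin w (by simp [hw, htrans _ _ _ hwz hz.2]) hwz


lemma reach_transfer {σ s : G.PStrat i} {τ τ' : G.OppProf i} {p p' : List G.Act}
    (hp : p <+: G.outcome (G.combine i σ τ)) (hdp : G.DecOf i p)
    (hp' : p' <+: G.outcome (G.combine i s τ')) (hdp' : G.DecOf i p')
    (hl : G.label p = G.label p') :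
    p <+: G.outcome (G.combine i s τ) :=
  reach_of_agree hp (agree_of_reach hp hdp hp' hdp' hl)

/-- If `(σ, τ)` does not reach `c` and `s` agrees with `σ` off the information sets at or
below `c`, then `(s, τ)` and `(σ, τ)` have the same outcome. -/
lemma outcome_eq_of_not_reaches {σ s : G.PStrat i} {τ : G.OppProf i} {c : G.Lab}
    (hs : ∀ b, ¬ G.AtOrBelow i b c → s.val b = σ.val b)
    (hnr : ¬ G.Reaches (G.combine i σ τ) i c) :
    G.outcome (G.combine i s τ) = G.outcome (G.combine i σ τ) := by
  refine (outcome_congr_from (p := []) List.nil_prefix List.nil_prefix ?_).symm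
  intro h' _ hpre hdec
  by_cases ho : G.owner h' = i
  · rw [act_combine_of_owner ho, act_combine_of_owner ho]
    refine (hs _ ?_).symm
    intro hab
    rcases atOrBelow_cases hab with he | hcb
    · exact hnr ⟨h', hpre, ⟨hdec, ho⟩, he⟩
    · obtain ⟨j, hj, ho', hl'⟩ := node_above_of_precedes hcb ⟨hdec, ho⟩ rfl
      exact hnr ⟨h'.take j, (List.take_prefix _ _).trans hpre,
        ⟨dec_take (prefix_outcome_mem hpre) hj, ho'⟩, hl'⟩
  · exact act_combine_of_not_owner ho σ s τ

variable (G i) in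
/-- The modification of `s` that plays like `σ` except at or below `c`. -/
noncomputable def hatStrat (σ s : G.PStrat i) (c : G.Lab) : G.PStrat i :=
  ⟨fun b => if G.AtOrBelow i b c then s.val b else σ.val b, by
    intro h hd
    by_cases hab : G.AtOrBelow i (G.label h) c
    · simpa [hab] using s.2 h hd
    · simpa [hab] using σ.2 h hd⟩

lemma hatStrat_on {σ s : G.PStrat i} {c b : G.Lab} (h : G.AtOrBelow i b c) :
    (G.hatStrat i σ s c).val b = s.val b := by simp [ExtGame.hatStrat, h]

lemma hatStrat_off {σ s : G.PStrat i} {c b : G.Lab} (h : ¬ G.AtOrBelow i b c) :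
    (G.hatStrat i σ s c).val b = σ.val b := by simp [ExtGame.hatStrat, h]

/-- If `(σ, τ)` reaches `c` at `p` and `(s, τ)` also reaches `c` (against the same `τ`),
then the hat modification of `s` plays exactly like `s` against `τ`. -/
lemma outcome_hat_eq {σ s : G.PStrat i} {τ : G.OppProf i} {c : G.Lab} {p : List G.Act}
    (hp : p <+: G.outcome (G.combine i σ τ)) (hdp : G.DecOf i p) (hlp : G.label p = c)
    (hsr : G.Reaches (G.combine i s τ) i c) :
    G.outcome (G.combine i (G.hatStrat i σ s c) τ) = G.outcome (G.combine i s τ) := by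
  obtain ⟨p', hp', hdp', hlp'⟩ := hsr
  have hagree := agree_of_reach hp hdp hp' hdp' (hlp.trans hlp'.symm)
  -- ŝ agrees with σ above p
  have hhat_agree : ∀ j (hj : j < p.length), G.owner (p.take j) = i →
      (G.hatStrat i σ s c).val (G.label (p.take j)) = σ.val (G.label (p.take j)) := by
    intro j hj ho
    apply hatStrat_off
    apply not_atOrBelow_of_precedes
    have := precedes_mk hdp hj ho
    rwa [hlp] at this
  have hphat : p <+: G.outcome (G.combine i (G.hatStrat i σ s c) τ) :=
    reach_of_agree hp hhat_agree
  have hps : p <+: G.outcome (G.combine i s τ) := reach_of_agree hp hagree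
  refine (outcome_congr_from hps hphat ?_).symm
  intro h' hph' hpre hdec
  by_cases ho : G.owner h' = i
  · rw [act_combine_of_owner ho, act_combine_of_owner ho]
    refine (hatStrat_on ?_).symm
    have := atOrBelow_mk hdp ⟨hdec, ho⟩ hph'
    rwa [hlp] at this
  · exact act_combine_of_not_owner ho s (G.hatStrat i σ s c) τ

end ExtGame

section Prob

open Classical

variable {Ω : Type*} [Fintype Ω]

lemma probOf_nonneg {p : Ω → ℝ} (hp : ∀ a, 0 ≤ p a) (E : Set Ω) : 0 ≤ probOf p E :=
  Finset.sum_nonneg fun a _ => Set.indicator_nonneg (fun b _ => hp b) a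

lemma single_le_probOf {p : Ω → ℝ} (hp : ∀ a, 0 ≤ p a) {E : Set Ω} {a : Ω} (ha : a ∈ E) :
    p a ≤ probOf p E := by
  have : E.indicator p a = p a := Set.indicator_of_mem ha p
  rw [probOf, ← this]
  exact Finset.single_le_sum (fun b _ => Set.indicator_nonneg (fun b _ => hp b) b)
    (Finset.mem_univ a)

lemma probOf_singleton_inter (p : Ω → ℝ) (a : Ω) (E : Set Ω) :
    probOf p ({a} ∩ E) = if a ∈ E then p a else 0 := by
  rw [probOf]
  have h₀ : ∀ b ∈ (Finset.univ : Finset Ω), b ≠ a → ({a} ∩ E).indicator p b = 0 := by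
    intro b _ hb; simp [Set.indicator_apply, hb]
  rw [Finset.sum_eq_single_of_mem a (Finset.mem_univ a) h₀]
  by_cases ha : a ∈ E <;> simp [Set.indicator_apply, ha]

lemma probOf_eq_sum_ite (p : Ω → ℝ) (E : Set Ω) :
    probOf p E = ∑ a, if a ∈ E then p a else 0 := by
  rw [probOf]
  exact Finset.sum_congr rfl fun a _ => by simp [Set.indicator_apply]

lemma probOf_zero_of_levels {p : Ω → ℝ} (hp : ∀ a, 0 ≤ p a) {E : Set Ω}
    (h : ¬ 0 < probOf p E) : ∀ a ∈ E, p a = 0 := by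
  have h0 : probOf p E = 0 := le_antisymm (not_lt.mp h) (probOf_nonneg hp E)
  intro a ha
  rw [probOf_eq_sum_ite] at h0
  have := (Finset.sum_eq_zero_iff_of_nonneg (fun b _ => by split_ifs with h; exacts [hp b, le_rfl])).mp h0 a (Finset.mem_univ a)
  simpa [ha] using this

/-- The conditional expectation with respect to the first level charging `E`. -/
lemma condExp_spec (L : LPS Ω) (E : Set Ω)
    (hex : ∃ ℓ : ℕ, ∃ hℓ : ℓ < L.m + 1, 0 < probOf (L.μ ⟨ℓ, hℓ⟩) E) :
    ∃ K : Fin (L.m + 1), 0 < probOf (L.μ K) E ∧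
      (∀ l (hl : l < L.m + 1), l < K.1 → ¬ 0 < probOf (L.μ ⟨l, hl⟩) E) ∧
      ∀ f : Ω → ℝ, L.condExp E f =
        (∑ a, (if a ∈ E then L.μ K a else 0) * f a) / probOf (L.μ K) E := by
  have h1 : ∀ V, L.condFirst V E =
      probOf (L.μ ⟨Nat.find hex, (Nat.find_spec hex).choose⟩) (V ∩ E) /
        probOf (L.μ ⟨Nat.find hex, (Nat.find_spec hex).choose⟩) E :=
    fun V => dif_pos hex
  refine ⟨⟨Nat.find hex, (Nat.find_spec hex).choose⟩, (Nat.find_spec hex).choose_spec,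
    ?_, ?_⟩
  · intro l hl hlK
    have := Nat.find_min hex hlK
    push_neg at this
    exact not_lt.mpr (this hl)
  · intro f
    rw [LPS.condExp]
    have : ∀ a : Ω, L.condFirst {a} E * f a =
        ((if a ∈ E then L.μ ⟨Nat.find hex, (Nat.find_spec hex).choose⟩ a else 0) * f a) /
          probOf (L.μ ⟨Nat.find hex, (Nat.find_spec hex).choose⟩) E := by
      intro a
      rw [h1, probOf_singleton_inter, div_mul_eq_mul_div]
    rw [Finset.sum_congr rfl (fun a _ => this a), ← Finset.sum_div]

end Prob

namespace ExtGame

variable {n : ℕ} {G : ExtGame n} {i : Fin n}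

lemma not_condDom_of_LPS {σ : G.PStrat i} {T : Set (G.OppProf i)} (L : LPS (G.OppProf i))
    (hcov : ∀ τ ∈ T, ∃ ℓ, 0 < L.μ ℓ τ)
    (hcond : ∀ c, G.IsInfo i c → G.ReachSet i σ c T = ∅ ∨
      G.AlmostBestAt i σ c L (G.ReachSet i σ c T)) :
    ¬ G.CondDom i σ T := by
  rintro ⟨c, hinfo, m, hdist, ⟨τ₀, hτ₀T, hτ₀r, hτ₀all⟩, hstrict⟩
  -- the mixed reach set coincides with the reach set
  have hRM : G.ReachSetMix i σ m c T = G.ReachSet i σ c T := by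
    ext τ
    constructor
    · rintro ⟨h1, h2, _⟩; exact ⟨h1, h2⟩
    · rintro ⟨h1, h2⟩
      refine ⟨h1, h2, fun s hs => ?_⟩
      obtain ⟨p, hp, hdp, hlp⟩ := h2
      obtain ⟨p', hp', hdp', hlp'⟩ := hτ₀all s hs
      exact ⟨p, reach_transfer hp hdp hp' hdp' (hlp.trans hlp'.symm), hdp, hlp⟩
  set E := G.ReachSet i σ c T with hE
  have hEne : E.Nonempty := ⟨τ₀, hτ₀T, hτ₀r⟩
  have hAB : G.AlmostBestAt i σ c L E := by
    rcases hcond c hinfo with h | h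
    · rw [hE, h] at hEne; simp at hEne
    · exact h
  have hex : ∃ ℓ : ℕ, ∃ hℓ : ℓ < L.m + 1, 0 < probOf (L.μ ⟨ℓ, hℓ⟩) E := by
    obtain ⟨τ₁, hτ₁⟩ := hEne
    obtain ⟨ℓ, hℓ⟩ := hcov τ₁ hτ₁.1
    exact ⟨ℓ.1, ℓ.2, lt_of_lt_of_le hℓ
      (by simpa using single_le_probOf (fun a => (L.dist ℓ).1 a) hτ₁)⟩
  obtain ⟨K, hKpos, _, hKexp⟩ := condExp_spec L E hex
  set w : G.OppProf i → ℝ := fun a => if a ∈ E then L.μ K a else 0 with hw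
  have hw0 : ∀ a, 0 ≤ w a := by
    intro a; rw [hw]; dsimp only; split_ifs; exacts [(L.dist K).1 a, le_rfl]
  have hwsum : ∑ a, w a = probOf (L.μ K) E := (probOf_eq_sum_ite _ _).symm
  have hwE : ∀ a, 0 < w a → a ∈ E := by
    intro a ha
    by_contra hna
    rw [hw] at ha; simp [hna] at ha
  -- for each s in the support of m, the hat strategy has the same payoff on E
  have hhat : ∀ s, 0 < m s → ∀ τ ∈ E,
      G.U i (G.combine i (G.hatStrat i σ s c) τ) = G.U i (G.combine i s τ) := by
    intro s hs τ hτ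
    obtain ⟨hτT, p, hp, hdp, hlp⟩ := hτ
    have hsr : G.Reaches (G.combine i s τ) i c := by
      obtain ⟨p', hp', hdp', hlp'⟩ := hτ₀all s hs
      exact ⟨p, reach_transfer hp hdp hp' hdp' (hlp.trans hlp'.symm), hdp, hlp⟩
    rw [ExtGame.U, ExtGame.U, outcome_hat_eq hp hdp hlp hsr]
  -- almost-best response inequality applied to each hat strategy
  have hABs : ∀ s, 0 < m s →
      L.condExp E (fun τ => G.U i (G.combine i (G.hatStrat i σ s c) τ)) ≤
        L.condExp E (fun τ => G.U i (G.combine i σ τ)) := by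
    intro s hs
    apply hAB
    intro c' _ hprec
    exact hatStrat_off (not_atOrBelow_of_precedes hprec)
  -- sum the inequalities weighted by m
  have hsum : ∑ s, m s * L.condExp E (fun τ => G.U i (G.combine i (G.hatStrat i σ s c) τ)) ≤
      L.condExp E (fun τ => G.U i (G.combine i σ τ)) := by
    calc ∑ s, m s * L.condExp E (fun τ => G.U i (G.combine i (G.hatStrat i σ s c) τ))
        ≤ ∑ s, m s * L.condExp E (fun τ => G.U i (G.combine i σ τ)) := by
          apply Finset.sum_le_sum
          intro s _
          rcases eq_or_lt_of_le (hdist.1 s) with h0 | h0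
          · rw [← h0]; simp
          · exact mul_le_mul_of_nonneg_left (hABs s h0) (le_of_lt h0)
      _ = L.condExp E (fun τ => G.U i (G.combine i σ τ)) := by
          rw [← Finset.sum_mul, hdist.2, one_mul]
  -- rewrite the left side as the conditional expectation of the mixture
  set Z := probOf (L.μ K) E with hZdef
  have hswap : ∑ s, m s * L.condExp E (fun τ => G.U i (G.combine i (G.hatStrat i σ s c) τ)) =
      (∑ a, w a * G.EUmixE i m a) / Z := by
    have h1 : ∀ s : G.PStrat i,
        m s * L.condExp E (fun τ => G.U i (G.combine i (G.hatStrat i σ s c) τ)) =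
          (∑ a, m s * (w a * G.U i (G.combine i (G.hatStrat i σ s c) a))) / Z := by
      intro s
      rw [hKexp, ← mul_div_assoc, Finset.mul_sum]
    rw [Finset.sum_congr rfl (fun s _ => h1 s), ← Finset.sum_div]
    congr 1
    rw [Finset.sum_comm]
    apply Finset.sum_congr rfl
    intro a _
    by_cases haE : a ∈ E
    · have : ∀ s : G.PStrat i, m s * (w a * G.U i (G.combine i (G.hatStrat i σ s c) a)) =
          w a * (m s * G.U i (G.combine i s a)) := by
        intro s
        rcases eq_or_lt_of_le (hdist.1 s) with h0 | h0
        · rw [← h0]; ring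
        · rw [hhat s h0 a haE]; ring
      rw [Finset.sum_congr rfl (fun s _ => this s), ← Finset.mul_sum, ExtGame.EUmixE]
    · have hwa : w a = 0 := by rw [hw]; simp [haE]
      simp [hwa]
  -- strict inequality
  have hlt : (∑ a, w a * G.U i (G.combine i σ a)) < ∑ a, w a * G.EUmixE i m a := by
    have hexpos : ∃ a, 0 < w a := by
      by_contra hno
      push_neg at hno
      have : ∑ a, w a ≤ 0 := Finset.sum_nonpos (fun a _ => hno a)
      rw [hwsum] at this
      exact absurd hKpos (not_lt.mpr this)
    obtain ⟨a₀, ha₀⟩ := hexpos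
    have hmem : ∀ a, a ∈ E → G.U i (G.combine i σ a) < G.EUmixE i m a := by
      intro a haE
      apply hstrict
      rw [hRM]
      exact haE
    apply Finset.sum_lt_sum
    · intro a _
      rcases eq_or_lt_of_le (hw0 a) with h0 | h0
      · rw [← h0]; simp
      · exact le_of_lt (mul_lt_mul_of_pos_left (hmem a (hwE a h0)) h0)
    · exact ⟨a₀, Finset.mem_univ a₀,
        mul_lt_mul_of_pos_left (hmem a₀ (hwE a₀ ha₀)) ha₀⟩
  have hfinal : L.condExp E (fun τ => G.U i (G.combine i σ τ)) <
      (∑ a, w a * G.EUmixE i m a) / Z := by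
    rw [hKexp]
    exact div_lt_div_of_pos_right hlt hKpos
  rw [← hswap] at hfinal
  exact absurd hsum (not_le.mpr hfinal)


variable (G i) in
/-- Strategies agreeing with `σ` except at or below `c`. -/
def Dhat (σ : G.PStrat i) (c : G.Lab) : Set (G.PStrat i) :=
  {s | ∀ b, ¬ G.AtOrBelow i b c → s.val b = σ.val b}

variable (G i) in
/-- The payoff-difference vector for the pair `(c, s)`. -/
noncomputable def gvec (σ : G.PStrat i) (T : Set (G.OppProf i)) (c : G.Lab) (s : G.PStrat i) :
    G.OppProf i → ℝ :=
  fun τ => if τ ∈ G.ReachSet i σ c T then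
    G.U i (G.combine i σ τ) - G.U i (G.combine i s τ) else 0

lemma U_eq_of_not_reach {σ s : G.PStrat i} {c : G.Lab} {T : Set (G.OppProf i)}
    {τ : G.OppProf i} (hs : s ∈ G.Dhat i σ c) (hτT : τ ∈ T)
    (hnr : τ ∉ G.ReachSet i σ c T) :
    G.U i (G.combine i s τ) = G.U i (G.combine i σ τ) := by
  have hnr' : ¬ G.Reaches (G.combine i σ τ) i c := fun hr => hnr ⟨hτT, hr⟩
  rw [ExtGame.U, ExtGame.U, outcome_eq_of_not_reaches hs hnr']

lemma reach_of_dhat_min {σ s : G.PStrat i} {c c₀ : G.Lab} {τ : G.OppProf i}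
    (hs : s ∈ G.Dhat i σ c) (hmin1 : ¬ G.Precedes i c c₀)
    (hr : G.Reaches (G.combine i σ τ) i c₀) :
    G.Reaches (G.combine i s τ) i c₀ := by
  obtain ⟨p, hp, hdp, hlp⟩ := hr
  refine ⟨p, reach_of_agree hp ?_, hdp, hlp⟩
  intro j hj ho
  apply hs
  intro hab
  have h2 := precedes_mk hdp hj ho
  rw [hlp] at h2
  rcases atOrBelow_cases hab with he | hcb
  · rw [← he] at hmin1; exact hmin1 h2
  · exact hmin1 (precedes_trans hcb h2)

lemma hatStrat_mem_Dhat (σ s : G.PStrat i) (c : G.Lab) :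
    G.hatStrat i σ s c ∈ G.Dhat i σ c := fun b hb => hatStrat_off hb


/-- Per-level construction: given `σ` not conditionally dominated and a nonempty set `W`
of opponents' profiles, there is a distribution supported in `W` against which `σ` is
(weakly) optimal within `Dhat c` on every reach set contained in `W`. -/
lemma exists_level {σ : G.PStrat i} {T : Set (G.OppProf i)}
    (hnd : ¬ G.CondDom i σ T) (W : Finset (G.OppProf i)) (hW : W.Nonempty)
    (hWT : ↑W ⊆ T) :
    ∃ μ : G.OppProf i → ℝ, IsDist μ ∧ (∀ τ, 0 < μ τ → τ ∈ W) ∧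
      ∀ c s, G.IsInfo i c → G.ReachSet i σ c T ⊆ ↑W → s ∈ G.Dhat i σ c →
        0 ≤ ∑ τ, μ τ * G.gvec i σ T c s τ := by
  classical
  set Pairs : Finset (G.Lab × G.PStrat i) := Finset.univ.filter
    (fun p => G.IsInfo i p.1 ∧ (G.ReachSet i σ p.1 T).Nonempty ∧
      G.ReachSet i σ p.1 T ⊆ ↑W ∧ p.2 ∈ G.Dhat i σ p.1) with hPairs
  have hPairs_mem : ∀ p : G.Lab × G.PStrat i, p ∈ Pairs ↔
      (G.IsInfo i p.1 ∧ (G.ReachSet i σ p.1 T).Nonempty ∧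
        G.ReachSet i σ p.1 T ⊆ ↑W ∧ p.2 ∈ G.Dhat i σ p.1) := by
    intro p; rw [hPairs, Finset.mem_filter]; simp
  rcases Finset.eq_empty_or_nonempty Pairs with hPe | hPne
  · -- no relevant pairs: the uniform distribution on W works
    refine ⟨fun τ => if τ ∈ W then (W.card : ℝ)⁻¹ else 0, ⟨?_, ?_⟩, ?_, ?_⟩
    · intro a
      dsimp only
      split_ifs
      · positivity
      · exact le_rfl
    · rw [Finset.sum_ite_mem, Finset.univ_inter, Finset.sum_const, nsmul_eq_mul]
      rw [mul_inv_cancel₀]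
      exact_mod_cast Finset.card_ne_zero_of_mem hW.choose_spec
    · intro τ hτ
      by_contra hτW
      simp [hτW] at hτ
    · intro c s hinfo hsub hD
      have hEe : G.ReachSet i σ c T = ∅ := by
        by_contra hne
        have hne' : (G.ReachSet i σ c T).Nonempty := Set.nonempty_iff_ne_empty.mpr hne
        have : (c, s) ∈ Pairs := (hPairs_mem (c, s)).mpr ⟨hinfo, hne', hsub, hD⟩
        rw [hPe] at this
        simp at this
      have : ∀ τ, G.gvec i σ T c s τ = 0 := by
        intro τ
        rw [ExtGame.gvec, hEe]
        simp
      simp [this]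
  -- main case: linear programming duality via separation
  by_cases hdual : ∃ lam : G.Lab × G.PStrat i → ℝ, (∀ p, 0 ≤ lam p) ∧
      (∑ p ∈ Pairs, lam p) = 1 ∧
      ∀ τ ∈ W, (∑ p ∈ Pairs, lam p * G.gvec i σ T p.1 p.2 τ) < 0
  · -- duality fails: construct a conditional domination, contradiction
    exfalso
    apply hnd
    obtain ⟨lam, hlam0, hlam1, hlamneg⟩ := hdual
    set Pos := Pairs.filter (fun p => 0 < lam p) with hPos
    have hPosPairs : Pos ⊆ Pairs := Finset.filter_subset _ _
    have hsumPos : ∑ p ∈ Pos, lam p = 1 := by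
      rw [hPos, Finset.sum_filter_of_ne]
      · exact hlam1
      · intro p _ hne
        exact lt_of_le_of_ne (hlam0 p) (Ne.symm hne)
    have hPosne : Pos.Nonempty := by
      by_contra hno
      rw [Finset.not_nonempty_iff_eq_empty] at hno
      rw [hno] at hsumPos
      simp at hsumPos
    set Ch := Pos.image Prod.fst with hCh
    have hChne : Ch.Nonempty := hPosne.image _
    obtain ⟨c₀, hc₀Ch, hc₀min⟩ := ExtGame.exists_minimal_rel (G.Precedes i)
      (fun a b c hab hbc => precedes_trans hab hbc) (fun a => precedes_irrefl) Ch hChne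
    obtain ⟨p₀, hp₀Pos, hp₀fst⟩ := Finset.mem_image.mp hc₀Ch
    have hp₀ := (hPairs_mem p₀).mp (hPosPairs hp₀Pos)
    rw [hp₀fst] at hp₀
    obtain ⟨hc₀info, hc₀ne, hc₀sub, _⟩ := hp₀
    -- the dominating mixture
    set mm : G.PStrat i → ℝ := fun t => ∑ p ∈ Pos, if p.2 = t then lam p else 0 with hmm
    have hmm0 : ∀ t, 0 ≤ mm t := by
      intro t
      apply Finset.sum_nonneg
      intro p _
      split_ifs
      · exact hlam0 p
      · exact le_rfl
    have hmm_supp : ∀ t, 0 < mm t → ∃ p ∈ Pos, p.2 = t := by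
      intro t ht
      by_contra hno
      push_neg at hno
      have : mm t = 0 := by
        rw [hmm]
        apply Finset.sum_eq_zero
        intro p hp
        simp [hno p hp]
      rw [this] at ht
      exact lt_irrefl _ ht
    have hmm1 : ∑ t, mm t = 1 := by
      rw [hmm, Finset.sum_comm]
      rw [Finset.sum_congr rfl (fun p _ => Finset.sum_ite_eq Finset.univ p.2
        (fun _ => lam p))]
      simpa using hsumPos
    have hEU : ∀ τ, G.EUmixE i mm τ = ∑ p ∈ Pos, lam p * G.U i (G.combine i p.2 τ) := by
      intro τ
      rw [ExtGame.EUmixE, Finset.sum_congr rfl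
        (fun t (_ : t ∈ Finset.univ) => by rw [hmm, Finset.sum_mul]), Finset.sum_comm]
      apply Finset.sum_congr rfl
      intro p _
      simp only [ite_mul, zero_mul, Finset.sum_ite_eq, Finset.mem_univ, if_true]
    obtain ⟨τ₂, hτ₂⟩ := hc₀ne
    have hreachall : ∀ τ ∈ G.ReachSet i σ c₀ T, ∀ t, 0 < mm t →
        G.Reaches (G.combine i t τ) i c₀ := by
      intro τ hτ t ht
      obtain ⟨p, hpPos, rfl⟩ := hmm_supp t ht
      have hp := (hPairs_mem p).mp (hPosPairs hpPos)
      exact reach_of_dhat_min hp.2.2.2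
        (hc₀min p.1 (Finset.mem_image_of_mem Prod.fst hpPos)) hτ.2
    refine ⟨c₀, hc₀info, mm, ⟨hmm0, hmm1⟩,
      ⟨τ₂, hτ₂.1, hτ₂.2, fun t ht => hreachall τ₂ hτ₂ t ht⟩, ?_⟩
    rintro τ ⟨hτT, hτr, _⟩
    have hτE : τ ∈ G.ReachSet i σ c₀ T := ⟨hτT, hτr⟩
    have hτW : τ ∈ W := hc₀sub hτE
    have hF := hlamneg τ hτW
    have hFPos : ∑ p ∈ Pos, lam p * G.gvec i σ T p.1 p.2 τ < 0 := by
      rw [hPos, Finset.sum_filter_of_ne]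
      · exact hF
      · intro p _ hne
        refine lt_of_le_of_ne (hlam0 p) fun h0 => hne ?_
        rw [← h0, zero_mul]
    have hterm : ∀ p ∈ Pos, lam p * G.U i (G.combine i p.2 τ) =
        lam p * G.U i (G.combine i σ τ) - lam p * G.gvec i σ T p.1 p.2 τ := by
      intro p hp
      have hpP := (hPairs_mem p).mp (hPosPairs hp)
      by_cases hE : τ ∈ G.ReachSet i σ p.1 T
      · rw [ExtGame.gvec]
        simp only [if_pos hE]
        ring
      · rw [ExtGame.gvec]
        simp only [if_neg hE]
        rw [U_eq_of_not_reach hpP.2.2.2 hτT hE]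
        ring
    rw [hEU τ, Finset.sum_congr rfl hterm, Finset.sum_sub_distrib, ← Finset.sum_mul,
      hsumPos, one_mul]
    linarith
  · -- separation
    set O : Set (G.OppProf i → ℝ) := {x | ∀ τ ∈ W, x τ < 0} with hO
    set C : Set (G.OppProf i → ℝ) := {x | ∃ lam : G.Lab × G.PStrat i → ℝ,
      (∀ p, 0 ≤ lam p) ∧ (∑ p ∈ Pairs, lam p) = 1 ∧
      x = fun τ => ∑ p ∈ Pairs, lam p * G.gvec i σ T p.1 p.2 τ} with hC
    have hOopen : IsOpen O := by
      have hOeq : O = ⋂ τ ∈ W, {x : G.OppProf i → ℝ | x τ < 0} := by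
        ext x; simp [hO]
      rw [hOeq]
      exact isOpen_biInter_finset fun τ _ =>
        isOpen_lt (continuous_apply τ) continuous_const
    have hOconv : Convex ℝ O := by
      intro x hx y hy a b ha hb hab
      intro τ hτ
      have h1 := hx τ hτ
      have h2 := hy τ hτ
      show a * x τ + b * y τ < 0
      rcases eq_or_lt_of_le ha with h0 | h0
      · have hb1 : b = 1 := by linarith
        rw [← h0, hb1, zero_mul, one_mul, zero_add]
        exact h2
      · have ha' : a * x τ < 0 := mul_neg_of_pos_of_neg h0 h1
        have hb' : b * y τ ≤ 0 := by nlinarith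
        linarith
    have hCconv : Convex ℝ C := by
      rintro x ⟨lx, hlx0, hlx1, rfl⟩ y ⟨ly, hly0, hly1, rfl⟩ a b ha hb hab
      refine ⟨fun p => a * lx p + b * ly p,
        fun p => add_nonneg (mul_nonneg ha (hlx0 p)) (mul_nonneg hb (hly0 p)), ?_, ?_⟩
      · rw [Finset.sum_add_distrib, ← Finset.mul_sum, ← Finset.mul_sum, hlx1, hly1]
        rw [mul_one, mul_one]
        exact hab
      · funext τ
        show a * (∑ p ∈ Pairs, lx p * G.gvec i σ T p.1 p.2 τ) +
          b * (∑ p ∈ Pairs, ly p * G.gvec i σ T p.1 p.2 τ) = _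
        rw [Finset.mul_sum, Finset.mul_sum, ← Finset.sum_add_distrib]
        exact Finset.sum_congr rfl fun p _ => by ring
    have hdisj : Disjoint O C := by
      rw [Set.disjoint_left]
      rintro x hxO ⟨lam, hl0, hl1, rfl⟩
      exact hdual ⟨lam, hl0, hl1, fun τ hτ => hxO τ hτ⟩
    obtain ⟨f, u, hfO, hfC⟩ := geometric_hahn_banach_open hOconv hOopen hCconv hdisj
    set φ : G.OppProf i → ℝ := fun ω => f (fun j => if ω = j then 1 else 0) with hφ
    have hexp : ∀ x : G.OppProf i → ℝ, f x = ∑ ω, x ω * φ ω := by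
      intro x
      conv_lhs => rw [pi_eq_sum_univ x]
      rw [map_sum]
      exact Finset.sum_congr rfl fun ω _ => by
        rw [map_smul, smul_eq_mul,
          show f (fun j => if ω = j then (1:ℝ) else 0) = φ ω from rfl]
    set base : G.OppProf i → ℝ := fun τ => if τ ∈ W then (-1:ℝ) else 0 with hbase
    have hbaseO : base ∈ O := by
      intro τ hτ
      show (if τ ∈ W then (-1:ℝ) else 0) < 0
      simp [hτ]
    have hbaselt : f base < u := hfO base hbaseO
    have hphi_zero : ∀ ω, ω ∉ W → φ ω = 0 := by
      intro ω hω
      by_contra h0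
      have hmem : (base + ((u - f base) / φ ω) • fun j => if ω = j then (1:ℝ) else 0) ∈ O := by
        intro τ hτ
        have hωτ : ω ≠ τ := fun he => hω (he ▸ hτ)
        show base τ + ((u - f base) / φ ω) * (if ω = τ then 1 else 0) < 0
        rw [if_neg hωτ, hbase]
        simp [hτ]
      have hlt := hfO _ hmem
      rw [map_add, map_smul, smul_eq_mul,
        show f (fun j => if ω = j then (1:ℝ) else 0) = φ ω from rfl,
        div_mul_cancel₀ _ h0] at hlt
      linarith
    have hphi_nonneg : ∀ ω, 0 ≤ φ ω := by
      intro ω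
      by_cases hω : ω ∈ W
      · by_contra h0
        push_neg at h0
        have hne : φ ω ≠ 0 := ne_of_lt h0
        have htneg : (u - f base) / φ ω < 0 :=
          div_neg_of_pos_of_neg (by linarith) h0
        have hmem : (base + ((u - f base) / φ ω) • fun j => if ω = j then (1:ℝ) else 0) ∈ O := by
          intro τ hτ
          show base τ + ((u - f base) / φ ω) * (if ω = τ then 1 else 0) < 0
          by_cases hωτ : ω = τ
          · rw [if_pos hωτ, hbase]
            subst hωτ
            simp only [if_pos hω]
            linarith
          · rw [if_neg hωτ, hbase]
            simp [hτ]
        have hlt := hfO _ hmem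
        rw [map_add, map_smul, smul_eq_mul,
          show f (fun j => if ω = j then (1:ℝ) else 0) = φ ω from rfl,
          div_mul_cancel₀ _ hne] at hlt
        linarith
      · rw [hphi_zero ω hω]
    have hu : 0 ≤ u := by
      by_contra hu0
      push_neg at hu0
      have hfb : f base < 0 := lt_trans hbaselt hu0
      have hεpos : 0 < u / f base := div_pos_of_neg_of_neg hu0 hfb
      have hmem : (u / f base) • base ∈ O := by
        intro τ hτ
        show (u / f base) * base τ < 0
        rw [hbase]
        simp only [if_pos hτ]
        nlinarith
      have hlt := hfO _ hmem
      rw [map_smul, smul_eq_mul, div_mul_cancel₀ _ (ne_of_lt hfb)] at hlt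
      linarith
    set S := ∑ ω, φ ω with hS
    have hCne : ∃ x, x ∈ C := by
      obtain ⟨p₀, hp₀⟩ := hPne
      refine ⟨_, ⟨fun p => if p = p₀ then 1 else 0, fun p => by dsimp only; split_ifs <;> norm_num,
        ?_, rfl⟩⟩
      rw [Finset.sum_ite_eq' Pairs p₀ (fun _ => (1:ℝ))]
      simp [hp₀]
    have hS0 : 0 < S := by
      rcases lt_or_ge 0 S with h | h
      · exact h
      · exfalso
        have hall : ∀ ω, φ ω = 0 := by
          intro ω
          have h1 : ∑ ω, φ ω ≤ 0 := h
          have := (Finset.sum_eq_zero_iff_of_nonneg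
            (fun b _ => hphi_nonneg b)).mp (le_antisymm h1 (Finset.sum_nonneg fun b _ => hphi_nonneg b))
          exact this ω (Finset.mem_univ ω)
        obtain ⟨x₀, hx₀⟩ := hCne
        have h2 : f x₀ = 0 := by
          rw [hexp x₀]
          simp [hall]
        have h3 : f base = 0 := by
          rw [hexp base]
          simp [hall]
        have := hfC x₀ hx₀
        rw [h2] at this
        rw [h3] at hbaselt
        linarith
    refine ⟨fun ω => φ ω / S, ⟨fun a => div_nonneg (hphi_nonneg a) (le_of_lt hS0), ?_⟩,
      ?_, ?_⟩
    · rw [← Finset.sum_div, ← hS, div_self (ne_of_gt hS0)]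
    · intro τ hτ
      by_contra hτW
      dsimp only at hτ
      rw [hphi_zero τ hτW] at hτ
      simp at hτ
    · intro c s hinfo hsub hD
      rcases Set.eq_empty_or_nonempty (G.ReachSet i σ c T) with hEe | hEne
      · have hg : ∀ τ, G.gvec i σ T c s τ = 0 := by
          intro τ
          rw [ExtGame.gvec, hEe]
          simp
        simp [hg]
      · have hmemP : (c, s) ∈ Pairs := (hPairs_mem (c, s)).mpr ⟨hinfo, hEne, hsub, hD⟩
        have hxp : (fun τ => ∑ p ∈ Pairs,
            (if p = (c, s) then (1:ℝ) else 0) * G.gvec i σ T p.1 p.2 τ) =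
            G.gvec i σ T c s := by
          funext τ
          simp only [ite_mul, zero_mul, one_mul]
          rw [Finset.sum_ite_eq' Pairs (c, s) (fun p => G.gvec i σ T p.1 p.2 τ)]
          simp [hmemP]
        have hle : u ≤ f (G.gvec i σ T c s) := by
          have := hfC _ ⟨fun p => if p = (c, s) then 1 else 0,
            fun p => by dsimp only; split_ifs <;> norm_num, by
              rw [Finset.sum_ite_eq' Pairs (c, s) (fun _ => (1:ℝ))]; simp [hmemP], rfl⟩
          rwa [hxp] at this
        have h0 : 0 ≤ ∑ ω, G.gvec i σ T c s ω * φ ω := by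
          rw [← hexp]
          linarith
        have heq : ∑ τ, φ τ / S * G.gvec i σ T c s τ =
            (∑ ω, G.gvec i σ T c s ω * φ ω) / S := by
          rw [Finset.sum_div]
          exact Finset.sum_congr rfl fun ω _ => by
            rw [div_mul_eq_mul_div, mul_comm]
        show 0 ≤ ∑ τ, φ τ / S * G.gvec i σ T c s τ
        rw [heq]
        exact div_nonneg h0 (le_of_lt hS0)


lemma exists_levels {σ : G.PStrat i} {T : Set (G.OppProf i)}
    (hnd : ¬ G.CondDom i σ T) :
    ∀ W : Finset (G.OppProf i), ↑W ⊆ T →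
      ∃ Ls : List (G.OppProf i → ℝ),
        (W.Nonempty → Ls ≠ []) ∧
        (∀ μ ∈ Ls, IsDist μ ∧ ∀ τ, 0 < μ τ → τ ∈ W) ∧
        (∀ τ ∈ W, ∃ μ ∈ Ls, 0 < μ τ) ∧
        (∀ c s, G.IsInfo i c → s ∈ G.Dhat i σ c → G.ReachSet i σ c T ⊆ ↑W →
          ∀ k (hk : k < Ls.length),
            (∀ l (hl : l < k), ∀ τ ∈ G.ReachSet i σ c T, (Ls[l]'(lt_trans hl hk)) τ = 0) →
            0 ≤ ∑ τ, Ls[k] τ * G.gvec i σ T c s τ) := by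
  intro W
  induction W using Finset.strongInduction with
  | _ W ih =>
    intro hWT
    rcases Finset.eq_empty_or_nonempty W with rfl | hWne
    · refine ⟨[], by simp, by simp, by simp, ?_⟩
      intro c s _ _ _ k hk
      simp at hk
    · obtain ⟨μ, hμdist, hμsupp, hμcond⟩ := exists_level hnd W hWne hWT
      set W' := W.filter (fun τ => ¬ 0 < μ τ) with hW'
      have hW'sub : W' ⊂ W := by
        refine ⟨Finset.filter_subset _ _, fun hsub => ?_⟩
        obtain ⟨τ₀, hτ₀⟩ : ∃ τ, 0 < μ τ := by
          by_contra hno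
          push_neg at hno
          have : ∑ τ, μ τ ≤ 0 := Finset.sum_nonpos fun τ _ => hno τ
          rw [hμdist.2] at this
          linarith
        have h2 := hsub (hμsupp τ₀ hτ₀)
        rw [hW', Finset.mem_filter] at h2
        exact h2.2 hτ₀
      obtain ⟨Ls', _, hdist', hcov', hcond'⟩ := ih W' hW'sub
        (fun τ hτ => hWT (Finset.mem_coe.mpr
          (Finset.filter_subset _ _ (Finset.mem_coe.mp hτ))))
      refine ⟨μ :: Ls', fun _ => by simp, ?_, ?_, ?_⟩
      · rintro ν hν
        rcases List.mem_cons.mp hν with rfl | hν'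
        · exact ⟨hμdist, hμsupp⟩
        · obtain ⟨h1, h2⟩ := hdist' ν hν'
          exact ⟨h1, fun τ hτ => Finset.filter_subset _ _ (h2 τ hτ)⟩
      · intro τ hτ
        by_cases hμτ : 0 < μ τ
        · exact ⟨μ, List.mem_cons_self, hμτ⟩
        · obtain ⟨ν, hν, hν'⟩ := hcov' τ (by rw [hW', Finset.mem_filter]; exact ⟨hτ, hμτ⟩)
          exact ⟨ν, List.mem_cons_of_mem _ hν, hν'⟩
      · intro c s hinfo hD hsub k hk hvan
        cases k with
        | zero =>
          have h0 := hμcond c s hinfo hsub hD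
          simpa using h0
        | succ k' =>
          have hE' : G.ReachSet i σ c T ⊆ ↑W' := by
            intro τ hτ
            have h0 := hvan 0 (Nat.succ_pos k') τ hτ
            simp only [List.getElem_cons_zero] at h0
            have hτW : τ ∈ W := hsub hτ
            rw [hW']
            rw [Finset.coe_filter]
            exact ⟨hτW, by rw [h0]; exact lt_irrefl 0⟩
          have hstep := hcond' c s hinfo hD hE' k' (by simpa using hk)
            (fun l hl τ hτ => by
              have h0 := hvan (l + 1) (by omega) τ hτ
              simpa using h0)
          simpa using hstep

end ExtGame

/-- `σ` is not conditionally dominated on `Σ'` iff there is an LPS on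
`Σ'_{-i}` with full support such that, conditional on reaching each reachable information
set `I` of `i`, `σ` is an almost-best response to the conditional LPS. -/
theorem not_condDom_iff_full_support_LPS {n : ℕ} (G : ExtGame n) (i : Fin n)
    (Ti : Set (G.PStrat i)) (T : Set (G.OppProf i)) (hT : T.Nonempty) (σ : G.PStrat i)
    (hσ : σ ∈ Ti) :
    ¬G.CondDom i σ T ↔
      ∃ L : LPS (G.OppProf i),
        (∀ (ℓ : Fin (L.m + 1)) (τ : G.OppProf i), 0 < L.μ ℓ τ → τ ∈ T) ∧
        (∀ τ ∈ T, ∃ ℓ, 0 < L.μ ℓ τ) ∧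
        ∀ c, G.IsInfo i c →
          G.ReachSet i σ c T = ∅ ∨
          G.AlmostBestAt i σ c L (G.ReachSet i σ c T) := by
  constructor
  · intro hnd
    have hTfin : T.Finite := Set.toFinite T
    obtain ⟨Ls, hne, hdist, hcov, hcond⟩ := ExtGame.exists_levels hnd hTfin.toFinset
      (by rw [hTfin.coe_toFinset])
    have hLs : Ls ≠ [] := by
      apply hne
      obtain ⟨τ, hτ⟩ := hT
      exact ⟨τ, hTfin.mem_toFinset.mpr hτ⟩
    have hlen : 0 < Ls.length := List.length_pos_iff.mpr hLs
    have hμok : ∀ ℓ : Fin (Ls.length - 1 + 1), ℓ.1 < Ls.length := fun ℓ => by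
      have := ℓ.2; omega
    refine ⟨⟨Ls.length - 1, fun ℓ => Ls[ℓ.1]'(hμok ℓ),
      fun ℓ => (hdist _ (List.getElem_mem _)).1⟩, ?_, ?_, ?_⟩
    · intro ℓ τ hpos
      have := (hdist _ (List.getElem_mem (hμok ℓ))).2 τ hpos
      exact hTfin.mem_toFinset.mp this
    · intro τ hτ
      obtain ⟨ν, hνLs, hνpos⟩ := hcov τ (hTfin.mem_toFinset.mpr hτ)
      obtain ⟨k, hk, hEq⟩ := List.mem_iff_getElem.mp hνLs
      refine ⟨⟨k, (by omega : k < Ls.length - 1 + 1)⟩, ?_⟩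
      show 0 < (Ls[k]'hk) τ
      rw [hEq]
      exact hνpos
    · intro c hinfo
      by_cases hE0 : G.ReachSet i σ c T = ∅
      · exact Or.inl hE0
      right
      intro σ' hagree
      set E := G.ReachSet i σ c T with hEdef
      have hEne : E.Nonempty := Set.nonempty_iff_ne_empty.mpr hE0
      set L : LPS (G.OppProf i) := ⟨Ls.length - 1, fun ℓ => Ls[ℓ.1]'(hμok ℓ),
        fun ℓ => (hdist _ (List.getElem_mem _)).1⟩ with hLdef
      have hex : ∃ ℓ : ℕ, ∃ hℓ : ℓ < L.m + 1, 0 < probOf (L.μ ⟨ℓ, hℓ⟩) E := by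
        obtain ⟨τ₁, hτ₁⟩ := hEne
        obtain ⟨ν, hνLs, hνpos⟩ := hcov τ₁ (hTfin.mem_toFinset.mpr hτ₁.1)
        obtain ⟨k, hk, hEq⟩ := List.mem_iff_getElem.mp hνLs
        refine ⟨k, (by omega : k < Ls.length - 1 + 1), ?_⟩
        have hνnn : ∀ a, 0 ≤ ν a := (hdist ν hνLs).1.1
        have h1 : (0:ℝ) < probOf ν E :=
          lt_of_lt_of_le hνpos (single_le_probOf hνnn hτ₁)
        exact lt_of_lt_of_eq h1 (congrArg (fun g => probOf g E) hEq.symm)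
      obtain ⟨K, hKpos, hKmin, hKexp⟩ := condExp_spec L E hex
      set shat := G.hatStrat i σ σ' c with hshat
      have hKlen : K.1 < Ls.length := by
        have hK2 : K.1 < Ls.length - 1 + 1 := K.2
        omega
      have hvan : ∀ l (hl : l < K.1), ∀ τ ∈ E, (Ls[l]'(lt_trans hl hKlen)) τ = 0 := by
        intro l hl τ hτ
        have hlm : l < L.m + 1 := lt_trans hl K.2
        have hnpos := hKmin l hlm hl
        exact probOf_zero_of_levels (L.dist ⟨l, hlm⟩).1 hnpos τ hτ
      have hineq := hcond c shat hinfo (ExtGame.hatStrat_mem_Dhat σ σ' c)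
        (by rw [hTfin.coe_toFinset]; exact fun τ h => h.1) K.1 hKlen hvan
      -- payoff equality between shat and σ' on E
      have hUeq : ∀ τ ∈ E, G.U i (G.combine i shat τ) = G.U i (G.combine i σ' τ) := by
        rintro τ ⟨hτT, p, hp, hdp, hlp⟩
        have hreach' : G.Reaches (G.combine i σ' τ) i c := by
          refine ⟨p, ExtGame.reach_of_agree hp (fun j hj ho => ?_), hdp, hlp⟩
          refine hagree _ (ExtGame.isInfo_take (ExtGame.prefix_outcome_mem hp) hj ho) ?_
          have := ExtGame.precedes_mk hdp hj ho
          rwa [hlp] at this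
        rw [ExtGame.U, ExtGame.U, hshat, ExtGame.outcome_hat_eq hp hdp hlp hreach']
      -- convert the sum inequality
      have hkey : 0 ≤ ∑ a, (if a ∈ E then L.μ K a else 0) *
          (G.U i (G.combine i σ a) - G.U i (G.combine i σ' a)) := by
        have hEq2 : ∀ a, (if a ∈ E then L.μ K a else 0) *
            (G.U i (G.combine i σ a) - G.U i (G.combine i σ' a)) =
            L.μ K a * G.gvec i σ T c shat a := by
          intro a
          by_cases haE : a ∈ E
          · rw [if_pos haE, ExtGame.gvec]
            rw [if_pos (hEdef ▸ haE), hUeq a haE]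
          · rw [if_neg haE, ExtGame.gvec, if_neg (fun h => haE (hEdef ▸ h))]
            ring
        rw [Finset.sum_congr rfl fun a _ => hEq2 a]
        have : L.μ K = Ls[K.1]'hKlen := rfl
        rw [this]
        exact hineq
      rw [hKexp, hKexp]
      apply (div_le_div_iff_of_pos_right hKpos).mpr
      have h3 : ∑ a, (if a ∈ E then L.μ K a else 0) * G.U i (G.combine i σ a) -
          ∑ a, (if a ∈ E then L.μ K a else 0) * G.U i (G.combine i σ' a) =
          ∑ a, (if a ∈ E then L.μ K a else 0) *
            (G.U i (G.combine i σ a) - G.U i (G.combine i σ' a)) := by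
        rw [← Finset.sum_sub_distrib]
        exact Finset.sum_congr rfl fun a _ => by ring
      linarith
  · rintro ⟨L, _, h2, h3⟩
    exact ExtGame.not_condDom_of_LPS L h2 h3
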